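/- Let M_n(x) be the n×n matrix with entries (M_n)_{ij} = x^{n-j} if i + j ≥ n+1 and 0 otherwise (rows and columns indexed 1..n). Then for x ≠ 0, M_n(x)^{-2} = x^{-n}·L_n(x), where L_n(x) is the tridiagonal matrix with diagonal (1+x,...,1+x,x), superdiagonal -1, subdiagonal -x. -/

import Mathlib

/-- The matrix `M_n(x)`: with 1-based indices, `(M_n)_{ij} = x^{n-j}` if `i+j ≥ n+1` and `0`
otherwise.  Here rows and columns are `0,…,n-1`, so the entry at `(i,j)` is `x^{n-1-j}`
when `i + j + 1 ≥ n`. -/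
noncomputable def Mmat (n : ℕ) (x : ℝ) : Matrix (Fin n) (Fin n) ℝ :=
  fun i j => if n ≤ (i : ℕ) + (j : ℕ) + 1 then x ^ (n - 1 - (j : ℕ)) else 0

/-- The tridiagonal matrix `L_n(x)` with diagonal `(1+x,…,1+x,x)`, superdiagonal `-1`
and subdiagonal `-x`. -/
noncomputable def Lmat (n : ℕ) (x : ℝ) : Matrix (Fin n) (Fin n) ℝ :=
  fun i j =>
    if (i : ℕ) = j then (if (i : ℕ) = n - 1 then x else 1 + x)
    else if (j : ℕ) = (i : ℕ) + 1 then -1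
    else if (i : ℕ) = (j : ℕ) + 1 then -x
    else 0

/-- Candidate inverse of `Mmat`. -/
noncomputable def Bmat (n : ℕ) (x : ℝ) : Matrix (Fin n) (Fin n) ℝ :=
  fun i j =>
    if (i : ℕ) + (j : ℕ) = n - 1 then (x⁻¹) ^ (n - 1 - (i : ℕ))
    else if (i : ℕ) + (j : ℕ) + 2 = n then -(x⁻¹) ^ (n - 1 - (i : ℕ))
    else 0

lemma pow_eq (x : ℝ) {a b : ℕ} (h : a = b) : x ^ a = x ^ b := by rw [h]

lemma mulB (n : ℕ) (x : ℝ) (A : Matrix (Fin n) (Fin n) ℝ) (i k : Fin n) :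
    (A * Bmat n x) i k =
      A i ⟨n - 1 - (k : ℕ), by have := k.isLt; omega⟩ * (x⁻¹) ^ (k : ℕ)
      + (if (k : ℕ) + 2 ≤ n then
          -(A i ⟨n - 2 - (k : ℕ), by have := k.isLt; omega⟩ * (x⁻¹) ^ ((k : ℕ) + 1)) else 0) := by
  have hk := k.isLt
  rw [Matrix.mul_apply]
  set a : Fin n := ⟨n - 1 - (k : ℕ), by omega⟩ with ha
  by_cases hg : (k : ℕ) + 2 ≤ n
  · set b : Fin n := ⟨n - 2 - (k : ℕ), by omega⟩ with hb
    have hab : a ≠ b := by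
      simp only [ha, hb, Fin.mk.injEq, ne_eq]
      omega
    have h0 : ∀ j ∈ (Finset.univ : Finset (Fin n)), j ∉ ({a, b} : Finset (Fin n)) →
        A i j * Bmat n x j k = 0 := by
      intro j _ hj
      simp only [Finset.mem_insert, Finset.mem_singleton, not_or] at hj
      have hj1 : (j : ℕ) ≠ n - 1 - (k : ℕ) := fun h => hj.1 (Fin.ext h)
      have hj2 : (j : ℕ) ≠ n - 2 - (k : ℕ) := fun h => hj.2 (Fin.ext h)
      have hjlt := j.isLt
      simp only [Bmat]
      rw [if_neg (by omega), if_neg (by omega), mul_zero]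
    rw [← Finset.sum_subset (Finset.subset_univ {a, b}) h0, Finset.sum_pair hab]
    have hBa : Bmat n x a k = (x⁻¹) ^ (k : ℕ) := by
      simp only [Bmat, ha, Fin.val_mk]
      rw [if_pos (by omega)]
      congr 1
      omega
    have hBb : Bmat n x b k = -(x⁻¹) ^ ((k : ℕ) + 1) := by
      simp only [Bmat, hb, Fin.val_mk]
      rw [if_neg (by omega), if_pos (by omega)]
      congr 2
      omega
    rw [hBa, hBb, if_pos hg]
    ring
  · have h0 : ∀ j ∈ (Finset.univ : Finset (Fin n)), j ≠ a →
        A i j * Bmat n x j k = 0 := by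
      intro j _ hj
      have hj1 : (j : ℕ) ≠ n - 1 - (k : ℕ) := fun h => hj (Fin.ext h)
      have hjlt := j.isLt
      simp only [Bmat]
      rw [if_neg (by omega), if_neg (by omega), mul_zero]
    rw [Finset.sum_eq_single a (fun j _ hj => h0 j (Finset.mem_univ j) hj)
      (fun h => absurd (Finset.mem_univ a) h)]
    have hBa : Bmat n x a k = (x⁻¹) ^ (k : ℕ) := by
      simp only [Bmat, ha, Fin.val_mk]
      rw [if_pos (by omega)]
      congr 1
      omega
    rw [hBa, if_neg hg, add_zero]

lemma M_mul_B (n : ℕ) (x : ℝ) (hx : x ≠ 0) : Mmat n x * Bmat n x = 1 := by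
  ext i k
  have hi := i.isLt
  have hk := k.isLt
  rw [mulB]
  simp only [Mmat, Matrix.one_apply, Fin.ext_iff, Fin.val_mk]
  by_cases hg : (k : ℕ) + 2 ≤ n
  · rw [if_pos hg]
    rw [show n - 1 - (n - 1 - (k : ℕ)) = (k : ℕ) from by omega,
        show n - 1 - (n - 2 - (k : ℕ)) = (k : ℕ) + 1 from by omega]
    by_cases h1 : (k : ℕ) ≤ (i : ℕ)
    · rw [if_pos (by omega)]
      by_cases h2 : (k : ℕ) + 1 ≤ (i : ℕ)
      · rw [if_pos (by omega), if_neg (by omega)]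
        field_simp
        rw [← mul_pow, ← mul_pow, mul_one_div_cancel hx]
        ring
      · rw [if_neg (by omega), if_pos (by omega)]
        field_simp
        rw [← mul_pow, mul_one_div_cancel hx]
        ring
    · rw [if_neg (by omega), if_neg (by omega), if_neg (by omega)]
      ring
  · rw [if_neg hg]
    rw [show n - 1 - (n - 1 - (k : ℕ)) = (k : ℕ) from by omega]
    by_cases h1 : (i : ℕ) = (k : ℕ)
    · rw [if_pos (by omega), if_pos h1]
      rw [add_zero]
      field_simp
      rw [← mul_pow, mul_one_div_cancel hx, one_pow]
    · rw [if_neg (by omega), if_neg h1]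
      ring

lemma B_mul_B (n : ℕ) (x : ℝ) (hx : x ≠ 0) :
    Bmat n x * Bmat n x = (x ^ n)⁻¹ • Lmat n x := by
  ext i k
  have hi := i.isLt
  have hk := k.isLt
  rw [mulB]
  simp only [Bmat, Lmat, Matrix.smul_apply, smul_eq_mul, Fin.val_mk]
  rw [show (x ^ n)⁻¹ = (x⁻¹) ^ n from by rw [inv_pow]]
  by_cases hik : (i : ℕ) = (k : ℕ)
  · -- diagonal
    by_cases hg : (k : ℕ) + 2 ≤ n
    · obtain ⟨m, hm⟩ : ∃ m, n = (k : ℕ) + 2 + m := ⟨n - ((k : ℕ) + 2), by omega⟩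
      rw [if_pos hg]
      rw [if_pos (by omega), if_neg (by omega), if_pos (by omega)]
      rw [if_pos hik, if_neg (by omega)]
      rw [show n - 1 - (i : ℕ) = m + 1 from by omega,
          pow_eq x⁻¹ (show n = (k : ℕ) + 2 + m from hm)]
      field_simp
      have := mul_inv_cancel₀ hx
      linear_combination (-(x⁻¹ * x⁻¹ ^ m * x⁻¹ ^ (k : ℕ))) * this
    · have hkn : (k : ℕ) = n - 1 := by omega
      obtain ⟨m, hm⟩ : ∃ m, n = m + 1 := ⟨n - 1, by omega⟩
      rw [if_neg hg]
      rw [if_pos (by omega)]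
      rw [if_pos hik, if_pos (by omega)]
      rw [show n - 1 - (i : ℕ) = 0 from by omega,
          pow_eq x⁻¹ (show (k : ℕ) = m from by omega),
          pow_eq x⁻¹ (show n = m + 1 from hm)]
      field_simp
      have := mul_inv_cancel₀ hx
      linear_combination (-(x⁻¹ ^ m)) * this
  · by_cases hik1 : (k : ℕ) = (i : ℕ) + 1
    · -- superdiagonal
      obtain ⟨m, hm⟩ : ∃ m, n = (i : ℕ) + 2 + m := ⟨n - ((i : ℕ) + 2), by omega⟩
      rw [if_neg (by omega), if_pos (by omega)]
      rw [if_neg hik, if_pos hik1]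
      rw [show n - 1 - (i : ℕ) = m + 1 from by omega,
          pow_eq x⁻¹ (show (k : ℕ) = (i : ℕ) + 1 from hik1),
          pow_eq x⁻¹ (show n = (i : ℕ) + 2 + m from hm)]
      by_cases hg : (k : ℕ) + 2 ≤ n
      · rw [if_pos hg, if_neg (by omega), if_neg (by omega)]
        field_simp
        ring
      · rw [if_neg hg]
        field_simp
        ring
    · by_cases hik2 : (i : ℕ) = (k : ℕ) + 1
      · -- subdiagonal
        have hg : (k : ℕ) + 2 ≤ n := by omega
        obtain ⟨m, hm⟩ : ∃ m, n = (k : ℕ) + 2 + m := ⟨n - ((k : ℕ) + 2), by omega⟩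
        rw [if_pos hg]
        rw [if_neg (by omega), if_neg (by omega)]
        rw [if_pos (by omega)]
        rw [if_neg hik, if_neg hik1, if_pos hik2]
        rw [show n - 1 - (i : ℕ) = m from by omega,
            pow_eq x⁻¹ (show n = (k : ℕ) + 2 + m from hm)]
        field_simp
        have := mul_inv_cancel₀ hx
        linear_combination (x⁻¹ * x⁻¹ ^ (k : ℕ) * x⁻¹ ^ m) * this
      · -- far off diagonal
        rw [if_neg (by omega), if_neg (by omega)]
        rw [if_neg hik, if_neg hik1, if_neg hik2]
        by_cases hg : (k : ℕ) + 2 ≤ n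
        · rw [if_pos hg, if_neg (by omega), if_neg (by omega)]
          ring
        · rw [if_neg hg]
          ring

theorem M_inv_sq_eq_L (n : ℕ) (x : ℝ) (hx : x ≠ 0) :
    (Mmat n x ^ 2)⁻¹ = (x ^ n)⁻¹ • Lmat n x := by
  have hinv : (Mmat n x)⁻¹ = Bmat n x := Matrix.inv_eq_right_inv (M_mul_B n x hx)
  rw [pow_two, Matrix.mul_inv_rev, hinv, B_mul_B n x hx]
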